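/- Let G be a topological group acting continuously on a topological space X, H₀ and H₁ subgroups of G with H₁ compact, such that H₀ and H₁ commute elementwise. Then for any x ∈ X, the closure of (H₁·H₀)·x equals H₁ · (closure of H₀·x). -/

import Mathlib

open Pointwise

/-- Let `G` be a topological group acting continuously on a topological
space `X`, and `H₀, H₁ ≤ G` subgroups with `H₁` compact, commuting elementwise.
Then for any `x ∈ X`, the closure of `(H₁·H₀)·x` equals `H₁ · (closure of H₀·x)`. -/
theorem stmt7 {G X : Type*} [Group G] [TopologicalSpace G] [IsTopologicalGroup G]
    [TopologicalSpace X] [MulAction G X]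
    (hc : Continuous (fun p : G × X => p.1 • p.2))
    (H₀ H₁ : Subgroup G) (hcpt : IsCompact (H₁ : Set G))
    (hcomm : ∀ h₀ ∈ H₀, ∀ h₁ ∈ H₁, h₀ * h₁ = h₁ * h₀) (x : X) :
    closure ((fun g : G => g • x) '' ((H₁ : Set G) * (H₀ : Set G))) =
      Set.image2 (fun (g : G) (y : X) => g • y) (H₁ : Set G)
        (closure ((fun g : G => g • x) '' (H₀ : Set G))) := by
  haveI : ContinuousSMul G X := ⟨hc⟩
  have himg : (fun g : G => g • x) '' ((H₁ : Set G) * (H₀ : Set G)) =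
      (H₁ : Set G) • ((fun g : G => g • x) '' (H₀ : Set G)) := by
    ext y
    constructor
    · rintro ⟨g, ⟨a, ha, b, hb, rfl⟩, rfl⟩
      exact ⟨a, ha, b • x, ⟨b, hb, rfl⟩, (mul_smul a b x).symm⟩
    · rintro ⟨a, ha, _, ⟨b, hb, rfl⟩, rfl⟩
      exact ⟨a * b, Set.mul_mem_mul ha hb, mul_smul a b x⟩
  have h2 : Set.image2 (fun (g : G) (y : X) => g • y) (H₁ : Set G)
      (closure ((fun g : G => g • x) '' (H₀ : Set G))) =
      (H₁ : Set G) • closure ((fun g : G => g • x) '' (H₀ : Set G)) := rfl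
  rw [himg, h2]
  apply le_antisymm
  · exact closure_minimal (Set.smul_subset_smul_left subset_closure)
      (IsClosed.smul_left_of_isCompact isClosed_closure hcpt)
  · calc (H₁ : Set G) • closure ((fun g : G => g • x) '' (H₀ : Set G))
        ⊆ closure (H₁ : Set G) • closure ((fun g : G => g • x) '' (H₀ : Set G)) :=
          Set.smul_subset_smul_right subset_closure
      _ ⊆ closure ((H₁ : Set G) • ((fun g : G => g • x) '' (H₀ : Set G))) :=
          smul_set_closure_subset _ _
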